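/- For k ≥ 2, the top-dimensional (i.e., (2k-1)-dimensional) homology with Z/2 coefficients of the deleted square of the k-skeleton of the 2k-simplex vanishes, and likewise for its quotient by the factor-swapping Z/2 action. -/

import Mathlib

open scoped Classical

/-- A cell of top dimension `2k-1` of the deleted square of the `k`-skeleton of the
`2k`-simplex (vertex set `Fin (2k+1)`): an ordered pair of disjoint faces, each with
at most `k+1` vertices, together using all `2k+1` vertices. -/
def IsTopCell (k : ℕ) (p : Finset (Fin (2 * k + 1)) × Finset (Fin (2 * k + 1))) : Prop :=
  Disjoint p.1 p.2 ∧ p.1.card ≤ k + 1 ∧ p.2.card ≤ k + 1 ∧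
    p.1.card + p.2.card = 2 * k + 1

/-- `p` is a cell of the deleted square having the codimension-one cell `(a, b)`
as a facet. -/
def HasFacet (k : ℕ) (p : Finset (Fin (2 * k + 1)) × Finset (Fin (2 * k + 1)))
    (a b : Finset (Fin (2 * k + 1))) : Prop :=
  IsTopCell k p ∧ ((a ⊆ p.1 ∧ b = p.2) ∨ (a = p.1 ∧ b ⊆ p.2))


lemma hasFacet_swap (k : ℕ) (p : Finset (Fin (2 * k + 1)) × Finset (Fin (2 * k + 1)))
    (a b : Finset (Fin (2 * k + 1))) : HasFacet k p a b ↔ HasFacet k p.swap b a := by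
  unfold HasFacet IsTopCell
  constructor
  · rintro ⟨⟨h1, h2, h3, h4⟩, h5⟩
    exact ⟨⟨h1.symm, h3, h2, by simp only [Prod.fst_swap, Prod.snd_swap] at *; omega⟩, by tauto⟩
  · rintro ⟨⟨h1, h2, h3, h4⟩, h5⟩
    exact ⟨⟨h1.symm, h3, h2, by simp only [Prod.fst_swap, Prod.snd_swap] at *; omega⟩, by tauto⟩

lemma aux_zero (k : ℕ) (hk : 2 ≤ k)
    (c : Finset (Fin (2 * k + 1)) × Finset (Fin (2 * k + 1)) → ZMod 2)
    (hb : ∀ a b : Finset (Fin (2 * k + 1)), Disjoint a b → a.card ≤ k + 1 →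
        b.card ≤ k + 1 → a.card + b.card = 2 * k →
        ∑ p ∈ Finset.univ.filter (fun p => HasFacet k p a b), c p = 0)
    (p : Finset (Fin (2 * k + 1)) × Finset (Fin (2 * k + 1)))
    (hp : IsTopCell k p) (h1 : p.1.card = k + 1) : c p = 0 := by
  obtain ⟨hd, hc1, hc2, hsum⟩ := hp
  have h2 : p.2.card = k := by omega
  have hcardc : (p.1ᶜ).card = k := by
    rw [Finset.card_compl, Fintype.card_fin, h1]; omega
  have hsub2 : p.2 ⊆ p.1ᶜ := fun x hx =>
    Finset.mem_compl.2 (fun hx1 => Finset.disjoint_left.1 hd hx1 hx)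
  have hcompl : p.2 = p.1ᶜ := Finset.eq_of_subset_of_card_le hsub2 (by omega)
  obtain ⟨b, hbsub, hbcard⟩ := Finset.exists_subset_card_eq (s := p.2) (n := k - 1) (by omega)
  have hdb : Disjoint p.1 b := hd.mono_right hbsub
  have key := hb p.1 b hdb (by omega) (by omega) (by omega)
  have hfilter : Finset.univ.filter (fun q => HasFacet k q p.1 b) = {p} := by
    ext q
    simp only [Finset.mem_filter, Finset.mem_univ, true_and, Finset.mem_singleton]
    constructor
    · rintro ⟨⟨hqd, hq1, hq2, hqs⟩, (⟨hsub, heq⟩ | ⟨heq, hsub⟩)⟩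
      · have := Finset.card_le_card hsub
        have : q.2.card = b.card := by rw [heq]
        omega
      · have hq2sub : q.2 ⊆ p.1ᶜ := fun x hx =>
          Finset.mem_compl.2 (fun hx1 => Finset.disjoint_left.1 hqd (heq ▸ hx1) hx)
        have hq1c : q.1.card = k + 1 := by rw [← heq, h1]
        have hq2e : q.2 = p.1ᶜ := Finset.eq_of_subset_of_card_le hq2sub (by omega)
        exact Prod.ext heq.symm (by rw [hq2e, ← hcompl])
    · rintro rfl
      exact ⟨⟨hd, hc1, hc2, hsum⟩, Or.inr ⟨rfl, hbsub⟩⟩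
  rw [hfilter, Finset.sum_singleton] at key
  exact key

lemma main_zero (k : ℕ) (hk : 2 ≤ k)
    (c : Finset (Fin (2 * k + 1)) × Finset (Fin (2 * k + 1)) → ZMod 2)
    (hb : ∀ a b : Finset (Fin (2 * k + 1)), Disjoint a b → a.card ≤ k + 1 →
        b.card ≤ k + 1 → a.card + b.card = 2 * k →
        ∑ p ∈ Finset.univ.filter (fun p => HasFacet k p a b), c p = 0)
    (p : Finset (Fin (2 * k + 1)) × Finset (Fin (2 * k + 1)))
    (hp : IsTopCell k p) : c p = 0 := by
  obtain ⟨hd, hc1, hc2, hsum⟩ := hp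
  by_cases h1 : p.1.card = k + 1
  · exact aux_zero k hk c hb p ⟨hd, hc1, hc2, hsum⟩ h1
  · have h2 : p.2.card = k + 1 := by omega
    have hb' : ∀ a b : Finset (Fin (2 * k + 1)), Disjoint a b → a.card ≤ k + 1 →
        b.card ≤ k + 1 → a.card + b.card = 2 * k →
        ∑ q ∈ Finset.univ.filter (fun q => HasFacet k q a b), c q.swap = 0 := by
      intro a b hab ha hbb hs
      have := hb b a hab.symm hbb ha (by omega)
      rw [← this]
      apply Finset.sum_nbij' (fun q => q.swap) (fun q => q.swap)
      · intro q hq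
        simp only [Finset.mem_filter, Finset.mem_univ, true_and] at hq ⊢
        exact (hasFacet_swap k q a b).1 hq
      · intro q hq
        simp only [Finset.mem_filter, Finset.mem_univ, true_and] at hq ⊢
        exact (hasFacet_swap k q.swap a b).2 (by simpa using hq)
      · intro q _; exact Prod.swap_swap q
      · intro q _; exact Prod.swap_swap q
      · intro q _; rfl
    have hps : IsTopCell k p.swap :=
      ⟨hd.symm, hc2, hc1, by simp only [Prod.fst_swap, Prod.snd_swap]; omega⟩
    have := aux_zero k hk (fun q => c q.swap) hb' p.swap hps h2
    simpa using this

/-- For `k ≥ 2`, the top-dimensional (i.e. `(2k-1)`-dimensional) cellular homology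
with `ℤ/2` coefficients of the deleted square of the `k`-skeleton of the
`2k`-simplex vanishes, and likewise for its quotient by the factor-swapping `ℤ/2`
action.  Since there are no cells of dimension `2k`, this says exactly that every
top-dimensional cellular cycle (resp. every symmetric top-dimensional cycle, these
computing the homology of the quotient) is zero. -/
theorem top_homology_of_deleted_square_vanishes (k : ℕ) (hk : 2 ≤ k) :
    (∀ c : Finset (Fin (2 * k + 1)) × Finset (Fin (2 * k + 1)) → ZMod 2,
      (∀ a b : Finset (Fin (2 * k + 1)), Disjoint a b → a.card ≤ k + 1 →
        b.card ≤ k + 1 → a.card + b.card = 2 * k →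
        ∑ p ∈ Finset.univ.filter (fun p => HasFacet k p a b), c p = 0) →
      ∀ p, IsTopCell k p → c p = 0) ∧
    (∀ c : Finset (Fin (2 * k + 1)) × Finset (Fin (2 * k + 1)) → ZMod 2,
      (∀ p, c (Prod.swap p) = c p) →
      (∀ a b : Finset (Fin (2 * k + 1)), Disjoint a b → a.card ≤ k + 1 →
        b.card ≤ k + 1 → a.card + b.card = 2 * k →
        ∑ p ∈ Finset.univ.filter (fun p => HasFacet k p a b), c p = 0) →
      ∀ p, IsTopCell k p → c p = 0) :=
  ⟨main_zero k hk, fun c _ hb => main_zero k hk c hb⟩
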